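/- Let α > 0 be a non-integer real number, let m = ⌈α⌉, and let x > 0. Then the left-sided Riemann–Liouville fractional derivative of order α (with base point 0) of the Gaussian function τ ↦ exp(-τ²/2) satisfies: the m-th iterated derivative at x of y ↦ (1/Γ(m-α)) ∫_0^y (y - τ)^(m-α-1) exp(-τ²/2) dτ equals Σ_{n=0}^{∞} ((-1)^n (2n)! / (2^n · n! · Γ(2n - α + 1))) · x^(2n-α). -/

import Mathlib

open MeasureTheory Real

private lemma gamma_prod (z : ℝ) : ∀ (k : ℕ), (∀ j : ℕ, j < k → z - j ≠ 0) →
    Real.Gamma (z + 1) = (∏ j ∈ Finset.range k, (z - j)) * Real.Gamma (z + 1 - k)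
  | 0, _ => by simp
  | (k+1), h => by
    have h1 := gamma_prod z k (fun j hj => h j (hj.trans (Nat.lt_succ_self k)))
    have h2 : z + 1 - (k : ℝ) = (z - k) + 1 := by ring
    have h3 := Real.Gamma_add_one (h k (Nat.lt_succ_self k))
    rw [h1, h2, h3, Finset.prod_range_succ]
    have h4 : z + 1 - ((k+1 : ℕ) : ℝ) = z - k := by push_cast; ring
    rw [h4]; ring

/-- master summability lemma -/
private lemma master {β : ℝ} (hβ : 0 < β) (p : ℕ) (R : ℝ) (hR : 0 ≤ R) :
    Summable (fun n : ℕ => ((2*n).factorial : ℝ) /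
      ((2:ℝ)^n * (n.factorial : ℝ) * Real.Gamma (2*(n:ℝ)+β+1)) *
      ((2*(n:ℝ)+2)^p * R^n)) := by
  have key : ∀ n : ℕ, 1 ≤ n → ((2*n).factorial : ℝ) /
      ((2:ℝ)^n * (n.factorial : ℝ) * Real.Gamma (2*(n:ℝ)+β+1)) *
      ((2*(n:ℝ)+2)^p * R^n) ≤
      ((p.factorial : ℝ) * Real.exp 2) * ((Real.exp 2 * (R/2))^n / n.factorial) := by
    intro n hn
    have hn' : (1:ℝ) ≤ (n:ℝ) := by exact_mod_cast hn
    have hΓfac : ((2*n).factorial : ℝ) ≤ Real.Gamma (2*(n:ℝ)+β+1) := by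
      have h1 : Real.Gamma (((2*n : ℕ):ℝ) + 1) = ((2*n).factorial : ℝ) :=
        Real.Gamma_nat_eq_factorial (2*n)
      rw [← h1]
      apply Real.Gamma_strictMonoOn_Ici.monotoneOn
      · simp only [Set.mem_Ici]; push_cast; linarith
      · simp only [Set.mem_Ici]; push_cast; linarith
      · push_cast; linarith
    have hΓpos : 0 < Real.Gamma (2*(n:ℝ)+β+1) := by
      apply Real.Gamma_pos_of_pos; linarith
    have hpow : (2*(n:ℝ)+2)^p ≤ (p.factorial : ℝ) * Real.exp (2*(n:ℝ)+2) := by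
      have h0 : (0:ℝ) ≤ 2*(n:ℝ)+2 := by positivity
      have h1 : (2*(n:ℝ)+2)^p / (p.factorial : ℝ) ≤ Real.exp (2*(n:ℝ)+2) :=
        le_trans (Finset.single_le_sum (f := fun i => (2*(n:ℝ)+2)^i / (i.factorial:ℝ))
          (fun i _ => by positivity) (Finset.self_mem_range_succ p))
          (Real.sum_le_exp_of_nonneg h0 _)
      have hp : (0:ℝ) < (p.factorial : ℝ) := by positivity
      calc (2*(n:ℝ)+2)^p = (2*(n:ℝ)+2)^p / (p.factorial : ℝ) * (p.factorial : ℝ) := by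
            field_simp
        _ ≤ Real.exp (2*(n:ℝ)+2) * (p.factorial : ℝ) := by
            apply mul_le_mul_of_nonneg_right h1 hp.le
        _ = (p.factorial : ℝ) * Real.exp (2*(n:ℝ)+2) := by ring
    have hexp : Real.exp (2*(n:ℝ)+2) = Real.exp 2 * (Real.exp 2)^n := by
      rw [← Real.exp_nat_mul, ← Real.exp_add]; ring_nf
    have hRn : (0:ℝ) ≤ R^n := by positivity
    have hfac2 : (0:ℝ) < ((2*n).factorial : ℝ) := by positivity
    calc ((2*n).factorial : ℝ) /
        ((2:ℝ)^n * (n.factorial : ℝ) * Real.Gamma (2*(n:ℝ)+β+1)) * ((2*(n:ℝ)+2)^p * R^n)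
        ≤ ((2*n).factorial : ℝ) /
          ((2:ℝ)^n * (n.factorial : ℝ) * ((2*n).factorial : ℝ)) *
          (((p.factorial : ℝ) * Real.exp (2*(n:ℝ)+2)) * R^n) := by
          gcongr
        _ = ((p.factorial : ℝ) * Real.exp 2) * ((Real.exp 2 * (R/2))^n / n.factorial) := by
          rw [hexp, mul_pow, div_pow]
          have h2 : ((2:ℝ))^n ≠ 0 := by positivity
          have h3 : ((n.factorial : ℝ)) ≠ 0 := by positivity
          field_simp
  rw [← summable_nat_add_iff 1]
  have hs : Summable (fun n : ℕ => ((p.factorial : ℝ) * Real.exp 2) *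
      ((Real.exp 2 * (R/2))^(n+1) / (n+1).factorial)) := by
    apply Summable.mul_left
    exact (summable_nat_add_iff 1).2 (Real.summable_pow_div_factorial _)
  apply Summable.of_nonneg_of_le _ (fun n => key (n+1) (Nat.le_add_left 1 n)) hs
  intro n
  have hΓ : 0 < Real.Gamma (2*(((n+1):ℕ):ℝ)+β+1) := by
    apply Real.Gamma_pos_of_pos
    have : (0:ℝ) ≤ ((n+1:ℕ):ℝ) := Nat.cast_nonneg _
    linarith
  positivity

private lemma real_beta {s t : ℝ} (hs : 0 < s) (ht : 0 < t) {y : ℝ} (hy : 0 < y) :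
    ∫ τ in (0:ℝ)..y, τ ^ (s-1) * (y - τ) ^ (t-1) =
      Real.Gamma s * Real.Gamma t / Real.Gamma (s+t) * y ^ (s+t-1) := by
  have h0 : ((∫ τ in (0:ℝ)..y, τ ^ (s-1) * (y - τ) ^ (t-1) : ℝ) : ℂ)
      = ∫ τ in (0:ℝ)..y, (τ:ℂ) ^ ((s:ℂ)-1) * ((y:ℂ) - τ) ^ ((t:ℂ)-1) := by
    rw [← intervalIntegral.integral_ofReal]
    apply intervalIntegral.integral_congr
    intro τ hτ
    rw [Set.uIcc_of_le hy.le] at hτ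
    have h1 : (0:ℝ) ≤ τ := hτ.1
    have h2 : (0:ℝ) ≤ y - τ := by linarith [hτ.2]
    simp only [Complex.ofReal_mul]
    rw [Complex.ofReal_cpow h1, Complex.ofReal_cpow h2]
    push_cast
    ring
  have hsc : 0 < (s:ℂ).re := by simpa using hs
  have htc : 0 < (t:ℂ).re := by simpa using ht
  have h1 := Complex.betaIntegral_scaled (s:ℂ) (t:ℂ) hy
  have h2 := Complex.Gamma_mul_Gamma_eq_betaIntegral hsc htc
  have hΓne : Complex.Gamma ((s:ℂ)+(t:ℂ)) ≠ 0 := by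
    apply Complex.Gamma_ne_zero
    intro mm h
    have : (s+t:ℝ) = -(mm:ℝ) := by
      have := congrArg Complex.re h
      simpa using this
    have hmm : (0:ℝ) ≤ (mm:ℝ) := Nat.cast_nonneg mm
    linarith
  have hbeta : Complex.betaIntegral (s:ℂ) (t:ℂ) =
      Complex.Gamma (s:ℂ) * Complex.Gamma (t:ℂ) / Complex.Gamma ((s:ℂ)+(t:ℂ)) := by
    field_simp [hΓne] at h2 ⊢
    rw [h2]
  apply Complex.ofReal_injective
  rw [h0, h1, hbeta]
  rw [Complex.ofReal_mul, Complex.ofReal_cpow hy.le, Complex.ofReal_div, Complex.ofReal_mul,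
    ← Complex.Gamma_ofReal, ← Complex.Gamma_ofReal, ← Complex.Gamma_ofReal]
  push_cast
  ring

/-- the coefficient of the series before differentiating -/
private noncomputable def cc (β : ℝ) (n : ℕ) : ℝ :=
  (-1:ℝ)^n * (2*n).factorial / ((2:ℝ)^n * (n.factorial : ℝ) * Real.Gamma (2*(n:ℝ)+β+1))

private noncomputable def dd (β : ℝ) (k n : ℕ) : ℝ :=
  cc β n * ∏ j ∈ Finset.range k, (2*(n:ℝ)+β-j)

private lemma abs_cc {β : ℝ} (hβ : 0 < β) (n : ℕ) :
    |cc β n| = ((2*n).factorial : ℝ) /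
      ((2:ℝ)^n * (n.factorial : ℝ) * Real.Gamma (2*(n:ℝ)+β+1)) := by
  have hΓ : 0 < Real.Gamma (2*(n:ℝ)+β+1) := by
    apply Real.Gamma_pos_of_pos
    have : (0:ℝ) ≤ (n:ℝ) := Nat.cast_nonneg n
    linarith
  have hB : 0 < (2:ℝ)^n * (n.factorial : ℝ) * Real.Gamma (2*(n:ℝ)+β+1) := by positivity
  rw [cc, abs_div, abs_mul, abs_pow, abs_neg, abs_one, one_pow, one_mul,
    abs_of_nonneg (by positivity : (0:ℝ) ≤ ((2*n).factorial : ℝ)), abs_of_pos hB]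

/-- uniform bound for the terms of the differentiated series -/
private lemma dd_bound {β : ℝ} (hβ : 0 < β) (hβ1 : β ≤ 1) (k n : ℕ) {x y : ℝ}
    (hx : 0 < x) (h1 : x/2 ≤ y) (h2 : y ≤ 2*x) :
    |dd β k n * y ^ (2*(n:ℝ)+β-k)| ≤
      (((k:ℝ)+1)^k * (2*x)^β * (x/2)^(-(k:ℝ))) *
        (((2*n).factorial : ℝ) / ((2:ℝ)^n * (n.factorial : ℝ) * Real.Gamma (2*(n:ℝ)+β+1)) *
          ((2*(n:ℝ)+2)^k * (4*x^2)^n)) := by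
  have hy : 0 < y := lt_of_lt_of_le (by linarith) h1
  have hsplit : y ^ (2*(n:ℝ)+β-k) = y^(2*n) * (y^β * y^(-(k:ℝ))) := by
    rw [← Real.rpow_natCast y (2*n), ← Real.rpow_add hy, ← Real.rpow_add hy]
    push_cast; ring_nf
  have habs : |dd β k n * y ^ (2*(n:ℝ)+β-k)| =
      |cc β n| * |∏ j ∈ Finset.range k, (2*(n:ℝ)+β-j)| *
        (y^(2*n) * (y^β * y^(-(k:ℝ)))) := by
    rw [dd, abs_mul, abs_mul, abs_of_pos (Real.rpow_pos_of_pos hy _), hsplit]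
  have hprod : |∏ j ∈ Finset.range k, (2*(n:ℝ)+β-j)| ≤ (((k:ℝ)+1)*(2*(n:ℝ)+2))^k := by
    rw [Finset.abs_prod]
    calc ∏ j ∈ Finset.range k, |2*(n:ℝ)+β-j|
        ≤ ∏ j ∈ Finset.range k, (((k:ℝ)+1)*(2*(n:ℝ)+2)) := by
          apply Finset.prod_le_prod (fun j _ => abs_nonneg _)
          intro j hj
          have hj' : (j:ℝ) ≤ k := by exact_mod_cast (Finset.mem_range.1 hj).le
          have hn0 : (0:ℝ) ≤ (n:ℝ) := Nat.cast_nonneg n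
          have hk0 : (0:ℝ) ≤ (k:ℝ) := Nat.cast_nonneg k
          have hj0 : (0:ℝ) ≤ (j:ℝ) := Nat.cast_nonneg j
          rw [abs_le]
          constructor <;> nlinarith
      _ = (((k:ℝ)+1)*(2*(n:ℝ)+2))^k := by
          rw [Finset.prod_const, Finset.card_range]
  have hpow1 : y^(2*n) ≤ (4*x^2)^n := by
    have : y^(2*n) = (y^2)^n := by rw [← pow_mul]
    rw [this]
    apply pow_le_pow_left₀ (by positivity)
    nlinarith
  have hpow2 : y^β ≤ (2*x)^β := Real.rpow_le_rpow hy.le h2 hβ.le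
  have hpow3 : y^(-(k:ℝ)) ≤ (x/2)^(-(k:ℝ)) :=
    Real.rpow_le_rpow_of_nonpos (by linarith) h1 (neg_nonpos.2 (Nat.cast_nonneg k))
  rw [habs, abs_cc hβ]
  have hq : (0:ℝ) ≤ ((2*n).factorial : ℝ) /
      ((2:ℝ)^n * (n.factorial : ℝ) * Real.Gamma (2*(n:ℝ)+β+1)) := by
    have hΓ : 0 < Real.Gamma (2*(n:ℝ)+β+1) := by
      apply Real.Gamma_pos_of_pos
      have : (0:ℝ) ≤ (n:ℝ) := Nat.cast_nonneg n
      linarith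
    positivity
  calc ((2*n).factorial : ℝ) / ((2:ℝ)^n * (n.factorial : ℝ) * Real.Gamma (2*(n:ℝ)+β+1)) *
        |∏ j ∈ Finset.range k, (2*(n:ℝ)+β-j)| * (y^(2*n) * (y^β * y^(-(k:ℝ))))
      ≤ ((2*n).factorial : ℝ) / ((2:ℝ)^n * (n.factorial : ℝ) * Real.Gamma (2*(n:ℝ)+β+1)) *
        ((((k:ℝ)+1)*(2*(n:ℝ)+2))^k) * ((4*x^2)^n * ((2*x)^β * (x/2)^(-(k:ℝ)))) := by
        gcongr
    _ = (((k:ℝ)+1)^k * (2*x)^β * (x/2)^(-(k:ℝ))) *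
        (((2*n).factorial : ℝ) / ((2:ℝ)^n * (n.factorial : ℝ) * Real.Gamma (2*(n:ℝ)+β+1)) *
          ((2*(n:ℝ)+2)^k * (4*x^2)^n)) := by
        rw [mul_pow]; ring

private lemma dd_summable {β : ℝ} (hβ : 0 < β) (hβ1 : β ≤ 1) (k : ℕ) {x : ℝ} (hx : 0 < x) :
    Summable (fun n => dd β k n * x ^ (2*(n:ℝ)+β-k)) := by
  refine Summable.of_norm (Summable.of_nonneg_of_le (fun n => norm_nonneg _)
    (fun n => dd_bound hβ hβ1 k n hx (by linarith) (by linarith)) ?_)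
  exact (master hβ k (4*x^2) (by positivity)).mul_left _

/-- series representation of the fractional integral -/
private lemma series_rep {β : ℝ} (hβ : 0 < β) (hβ1 : β ≤ 1) {y : ℝ} (hy : 0 < y) :
    (1 / Real.Gamma β) * ∫ τ in (0:ℝ)..y, (y - τ) ^ (β-1) * Real.exp (-τ^2/2) =
      ∑' n : ℕ, cc β n * y ^ (2*(n:ℝ)+β) := by
  have hΓβ : 0 < Real.Gamma β := Real.Gamma_pos_of_pos hβ
  have hΓn : ∀ n : ℕ, 0 < Real.Gamma (2*(n:ℝ)+β+1) := by
    intro n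
    apply Real.Gamma_pos_of_pos
    have : (0:ℝ) ≤ (n:ℝ) := Nat.cast_nonneg n
    linarith
  -- pointwise expansion of the integrand
  have hexp : ∀ τ : ℝ, (y - τ)^(β-1) * Real.exp (-τ^2/2) =
      ∑' n : ℕ, ((-1:ℝ)^n / ((2:ℝ)^n * n.factorial)) * (τ^(2*n) * (y - τ)^(β-1)) := by
    intro τ
    have h1 : Real.exp (-τ^2/2) = ∑' n : ℕ, (-τ^2/2)^n / n.factorial := by
      rw [Real.exp_eq_exp_ℝ, NormedSpace.exp_eq_tsum_div]
    rw [h1, ← tsum_mul_left]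
    apply tsum_congr
    intro n
    have h2 : (-τ^2/2)^n = ((-1:ℝ))^n * τ^(2*n) / 2^n := by
      rw [div_pow, neg_pow, pow_mul]
    rw [h2]
    have hfne : ((n.factorial : ℝ)) ≠ 0 := by positivity
    field_simp
  -- integrability of the terms
  have hker : IntervalIntegrable (fun τ => (y - τ)^(β-1)) volume 0 y := by
    have h := intervalIntegral.intervalIntegrable_rpow' (a := (0:ℝ)) (b := y) (r := β-1) (by linarith)
    have h2 := h.comp_sub_left y
    simpa using h2.symm
  have hFint : ∀ n : ℕ, IntervalIntegrable
      (fun τ => ((-1:ℝ)^n / ((2:ℝ)^n * n.factorial)) * (τ^(2*n) * (y - τ)^(β-1))) volume 0 y := by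
    intro n
    exact (hker.continuousOn_mul ((continuous_pow (2*n)).continuousOn)).const_mul _
  -- value of the beta-type integrals
  have hbval : ∀ n : ℕ, (∫ τ in (0:ℝ)..y, τ^(2*n) * (y - τ)^(β-1)) =
      ((2*n).factorial : ℝ) * Real.Gamma β / Real.Gamma (2*(n:ℝ)+β+1) * y^(2*(n:ℝ)+β) := by
    intro n
    have hb := real_beta (s := 2*(n:ℝ)+1) (t := β) (by positivity) hβ hy
    have hΓfact : Real.Gamma (2*(n:ℝ)+1) = ((2*n).factorial : ℝ) := by
      rw [show 2*(n:ℝ)+1 = ((2*n:ℕ):ℝ)+1 by push_cast; ring, Real.Gamma_nat_eq_factorial]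
    have harg : 2*(n:ℝ)+1+β = 2*(n:ℝ)+β+1 := by ring
    rw [harg, show 2*(n:ℝ)+β+1-1 = 2*(n:ℝ)+β from by ring, hΓfact] at hb
    rw [← hb]
    apply intervalIntegral.integral_congr
    intro τ _
    show τ^(2*n) * (y - τ)^(β-1) = τ ^ (2*(n:ℝ)+1-1) * (y - τ)^(β-1)
    rw [show 2*(n:ℝ)+1-1 = ((2*n : ℕ):ℝ) from by push_cast; ring, Real.rpow_natCast]
  -- summability of the integral norms
  have hsum : Summable (fun n : ℕ => (1 / ((2:ℝ)^n * n.factorial)) *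
      (((2*n).factorial : ℝ) * Real.Gamma β / Real.Gamma (2*(n:ℝ)+β+1) * y^(2*(n:ℝ)+β))) := by
    have hm := (master hβ 0 (y^2) (by positivity)).mul_left (Real.Gamma β * y^β)
    apply Summable.congr hm
    intro n
    have hy2 : y ^ (2*(n:ℝ)+β) = (y^2)^n * y^β := by
      rw [← pow_mul, ← Real.rpow_natCast y (2*n), ← Real.rpow_add hy]
      push_cast; ring_nf
    rw [pow_zero, one_mul, hy2]
    have h2n : ((2:ℝ)^n) ≠ 0 := by positivity
    have hfne : ((n.factorial : ℝ)) ≠ 0 := by positivity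
    have hΓne : Real.Gamma (2*(n:ℝ)+β+1) ≠ 0 := (hΓn n).ne'
    field_simp
  -- norms of the integrals
  have hnorm : ∀ n : ℕ, (∫ τ in Set.Ioc (0:ℝ) y,
      ‖((-1:ℝ)^n / ((2:ℝ)^n * n.factorial)) * (τ^(2*n) * (y - τ)^(β-1))‖) =
      (1 / ((2:ℝ)^n * n.factorial)) *
      (((2*n).factorial : ℝ) * Real.Gamma β / Real.Gamma (2*(n:ℝ)+β+1) * y^(2*(n:ℝ)+β)) := by
    intro n
    have heq : ∀ τ ∈ Set.Ioc (0:ℝ) y,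
        ‖((-1:ℝ)^n / ((2:ℝ)^n * n.factorial)) * (τ^(2*n) * (y - τ)^(β-1))‖ =
        (1 / ((2:ℝ)^n * n.factorial)) * (τ^(2*n) * (y - τ)^(β-1)) := by
      intro τ hτ
      have h1 : (0:ℝ) ≤ τ^(2*n) := pow_nonneg hτ.1.le _
      have h2 : (0:ℝ) ≤ (y - τ)^(β-1) := Real.rpow_nonneg (by linarith [hτ.2]) _
      rw [Real.norm_eq_abs, abs_mul, abs_div, abs_pow, abs_neg, abs_one, one_pow,
        abs_of_pos (by positivity : (0:ℝ) < (2:ℝ)^n * n.factorial),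
        abs_of_nonneg (mul_nonneg h1 h2)]
    rw [setIntegral_congr_fun measurableSet_Ioc heq, ← intervalIntegral.integral_of_le hy.le,
      intervalIntegral.integral_const_mul, hbval n]
  -- interchange of sum and integral
  have hchain : (∫ τ in (0:ℝ)..y, (y - τ)^(β-1) * Real.exp (-τ^2/2)) =
      ∑' n : ℕ, (∫ τ in (0:ℝ)..y,
        ((-1:ℝ)^n / ((2:ℝ)^n * n.factorial)) * (τ^(2*n) * (y - τ)^(β-1))) := by
    have h1 : (∫ τ in (0:ℝ)..y, (y - τ)^(β-1) * Real.exp (-τ^2/2)) =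
        ∫ τ in Set.Ioc (0:ℝ) y, ∑' n : ℕ,
          ((-1:ℝ)^n / ((2:ℝ)^n * n.factorial)) * (τ^(2*n) * (y - τ)^(β-1)) := by
      rw [intervalIntegral.integral_of_le hy.le]
      exact setIntegral_congr_fun measurableSet_Ioc (fun τ _ => hexp τ)
    have hInt : ∀ n : ℕ, Integrable
        (fun τ => ((-1:ℝ)^n / ((2:ℝ)^n * n.factorial)) * (τ^(2*n) * (y - τ)^(β-1)))
        (volume.restrict (Set.Ioc (0:ℝ) y)) := fun n => (hFint n).1
    have hS : Summable (fun n : ℕ => ∫ τ in Set.Ioc (0:ℝ) y,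
        ‖((-1:ℝ)^n / ((2:ℝ)^n * n.factorial)) * (τ^(2*n) * (y - τ)^(β-1))‖) :=
      hsum.congr (fun n => (hnorm n).symm)
    rw [h1, ← MeasureTheory.integral_tsum_of_summable_integral_norm hInt hS]
    apply tsum_congr
    intro n
    rw [intervalIntegral.integral_of_le hy.le]
  -- assemble
  rw [hchain, ← tsum_mul_left]
  apply tsum_congr
  intro n
  rw [intervalIntegral.integral_const_mul, hbval n, cc]
  have h2n : ((2:ℝ)^n) ≠ 0 := by positivity
  have hfne : ((n.factorial : ℝ)) ≠ 0 := by positivity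
  have hΓne : Real.Gamma (2*(n:ℝ)+β+1) ≠ 0 := (hΓn n).ne'
  field_simp

/-- termwise differentiation -/
private lemma deriv_step {β : ℝ} (hβ : 0 < β) (hβ1 : β ≤ 1) (k : ℕ) {x : ℝ} (hx : 0 < x) :
    HasDerivAt (fun y => ∑' n : ℕ, dd β k n * y ^ (2*(n:ℝ)+β-k))
      (∑' n : ℕ, dd β (k+1) n * x ^ (2*(n:ℝ)+β-(k+1))) x := by
  have hdd : ∀ n : ℕ, dd β (k+1) n = dd β k n * (2*(n:ℝ)+β-k) := by
    intro n
    rw [dd, dd, Finset.prod_range_succ]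
    ring
  have hmem : x ∈ Set.Ioo (x/2) (2*x) := ⟨by linarith, by linarith⟩
  have key := hasDerivAt_tsum_of_isPreconnected
    (u := fun n : ℕ => ((((k+1:ℕ):ℝ)+1)^(k+1) * (2*x)^β * (x/2)^(-((k+1:ℕ):ℝ))) *
        (((2*n).factorial : ℝ) / ((2:ℝ)^n * (n.factorial : ℝ) * Real.Gamma (2*(n:ℝ)+β+1)) *
          ((2*(n:ℝ)+2)^(k+1) * (4*x^2)^n)))
    (g := fun n y => dd β k n * y ^ (2*(n:ℝ)+β-k))
    (g' := fun n y => dd β (k+1) n * y ^ (2*(n:ℝ)+β-((k+1:ℕ):ℝ)))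
    (t := Set.Ioo (x/2) (2*x)) (y₀ := x) (y := x)
    ((master hβ (k+1) (4*x^2) (by positivity)).mul_left _)
    isOpen_Ioo (convex_Ioo _ _).isPreconnected
    ?_ ?_ hmem (dd_summable hβ hβ1 k hx) hmem
  · have : ∀ n : ℕ, dd β (k+1) n * x ^ (2*(n:ℝ)+β-((k+1:ℕ):ℝ)) =
        dd β (k+1) n * x ^ (2*(n:ℝ)+β-(k+1)) := by
      intro n; push_cast; ring_nf
    rw [tsum_congr this] at key
    exact key
  · -- HasDerivAt of each term
    intro n y hy
    have hy0 : y ≠ 0 := by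
      have : 0 < y := lt_trans (by linarith) hy.1
      exact this.ne'
    have h := (Real.hasDerivAt_rpow_const (p := 2*(n:ℝ)+β-k) (Or.inl hy0)).const_mul (dd β k n)
    convert h using 1
    show dd β (k+1) n * y ^ (2*(n:ℝ)+β-((k+1:ℕ):ℝ)) = _
    rw [hdd n]
    have : 2*(n:ℝ)+β-((k+1:ℕ):ℝ) = 2*(n:ℝ)+β-k-1 := by push_cast; ring
    rw [this]
    ring
    rfl
  · -- bound
    intro n y hy
    rw [Real.norm_eq_abs]
    exact dd_bound hβ hβ1 (k+1) n hx hy.1.le hy.2.le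

private lemma iter_deriv {β : ℝ} (hβ : 0 < β) (hβ1 : β ≤ 1) (k : ℕ) :
    ∀ x : ℝ, 0 < x →
      iteratedDeriv k (fun y => ∑' n : ℕ, cc β n * y ^ (2*(n:ℝ)+β)) x =
        ∑' n : ℕ, dd β k n * x ^ (2*(n:ℝ)+β-k) := by
  induction k with
  | zero =>
    intro x hx
    simp [iteratedDeriv_zero, dd]
  | succ k ih =>
    intro x hx
    rw [iteratedDeriv_succ]
    have hev : iteratedDeriv k (fun y => ∑' n : ℕ, cc β n * y ^ (2*(n:ℝ)+β)) =ᶠ[nhds x]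
        (fun y => ∑' n : ℕ, dd β k n * y ^ (2*(n:ℝ)+β-k)) := by
      filter_upwards [isOpen_Ioi.mem_nhds (Set.mem_Ioi.2 hx)] with y hy
      exact ih y hy
    rw [hev.deriv_eq]
    push_cast
    exact (deriv_step hβ hβ1 k hx).deriv

theorem rl_derivative_gaussian_zero (α : ℝ) (hα : 0 < α) (hαni : ∀ j : ℤ, α ≠ j)
    (m : ℕ) (hm : m = ⌈α⌉₊) (x : ℝ) (hx : 0 < x) :
    iteratedDeriv m
      (fun y => (1 / Real.Gamma ((m : ℝ) - α)) *
        ∫ τ in (0 : ℝ)..y, (y - τ) ^ ((m : ℝ) - α - 1) * Real.exp (-τ ^ 2 / 2)) x =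
      ∑' n : ℕ,
        ((-1 : ℝ) ^ n * (2 * n).factorial /
          (2 ^ n * n.factorial * Real.Gamma (2 * n - α + 1))) * x ^ (2 * (n : ℝ) - α) := by
  set β : ℝ := (m : ℝ) - α with hβdef
  have hαm : α ≤ m := by rw [hm]; exact Nat.le_ceil α
  have hne : α ≠ (m : ℝ) := by
    intro h; exact hαni m (by exact_mod_cast h)
  have hβ : 0 < β := by
    have := lt_of_le_of_ne hαm hne
    simp only [hβdef]; linarith
  have hβ1 : β ≤ 1 := by
    have : (⌈α⌉₊ : ℝ) < α + 1 := Nat.ceil_lt_add_one hα.le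
    rw [hm] at *; simp only [hβdef]; linarith
  have hfe : (fun y => (1 / Real.Gamma β) *
        ∫ τ in (0 : ℝ)..y, (y - τ) ^ (β - 1) * Real.exp (-τ ^ 2 / 2)) =ᶠ[nhds x]
      (fun y => ∑' n : ℕ, cc β n * y ^ (2*(n:ℝ)+β)) := by
    filter_upwards [isOpen_Ioi.mem_nhds (Set.mem_Ioi.2 hx)] with y hy
    exact series_rep hβ hβ1 hy
  rw [Filter.EventuallyEq.iteratedDeriv_eq m hfe, iter_deriv hβ hβ1 m x hx]
  apply tsum_congr
  intro n
  have hexp : 2*(n:ℝ)+β-(m:ℝ) = 2*(n:ℝ)-α := by rw [hβdef]; ring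
  rw [hexp]
  congr 1
  have hprod0 : ∀ j : ℕ, j < m → (2*(n:ℝ)+β) - j ≠ 0 := by
    intro j hj h
    apply hαni ((m:ℤ) - j + 2*n)
    have hβe : β = (j:ℝ) - 2*n := by linarith
    rw [hβdef] at hβe
    push_cast
    linarith
  have hg2 := gamma_prod (2*(n:ℝ)+β) m hprod0
  have harg : 2*(n:ℝ)+β+1-(m:ℝ) = 2*(n:ℝ)-α+1 := by rw [hβdef]; ring
  have hΓne : Real.Gamma (2*(n:ℝ)-α+1) ≠ 0 := by
    apply Real.Gamma_ne_zero
    intro j h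
    apply hαni (2*(n:ℤ) + 1 + j)
    push_cast
    linarith
  have hprodne : (∏ j ∈ Finset.range m, (2*(n:ℝ)+β-j)) ≠ 0 :=
    Finset.prod_ne_zero_iff.2 (fun j hj => hprod0 j (Finset.mem_range.1 hj))
  have h2n : ((2:ℝ)^n) ≠ 0 := by positivity
  have hfne : ((n.factorial : ℝ)) ≠ 0 := by positivity
  rw [dd, cc, hg2, harg]
  field_simp
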